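/- Let σ₁,…,σ_k be the elementary symmetric polynomials in z₁,…,z_k. The vector field V₁ = Σ_{j=1}^k z_j² ∂_{z_j} pushes forward under π = (σ₁,…,σ_k) to U₁ = Σ_{h=1}^k (σ₁σ_h − (h+1)σ_{h+1}) ∂_{σ_h}; equivalently, for each h ∈ [1,k], Σ_{j=1}^k z_j² ∂σ_h/∂z_j = σ₁σ_h − (h+1)σ_{h+1}, with the convention σ_{k+1} = 0. -/

import Mathlib

/-- The elementary symmetric function of degree `h` in `k` variables. -/
noncomputable def esymm (k h : ℕ) (z : Fin k → ℂ) : ℂ :=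
  ∑ s ∈ Finset.powersetCard h Finset.univ, ∏ i ∈ s, z i

open Finset

lemma expand_update (k m : ℕ) (z : Fin k → ℂ) (j : Fin k) (t : ℂ) :
    esymm k (m + 1) (Function.update z j t)
      = (∑ s ∈ (univ.erase j).powersetCard (m + 1), ∏ i ∈ s, z i)
        + t * ∑ s ∈ (univ.erase j).powersetCard m, ∏ i ∈ s, z i := by
  have hu : (univ : Finset (Fin k)) = insert j (univ.erase j) := by
    simp [insert_erase (mem_univ j)]
  rw [esymm]
  conv_lhs => rw [hu, powersetCard_succ_insert (notMem_erase j univ)]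
  rw [sum_union]
  · congr 1
    · apply sum_congr rfl
      intro s hs
      apply prod_congr rfl
      intro i hi
      have : i ≠ j := by
        intro e; subst e
        exact (notMem_erase i univ) ((mem_powersetCard.1 hs).1 hi)
      simp [Function.update_of_ne this]
    · rw [sum_image]
      · rw [mul_sum]
        apply sum_congr rfl
        intro s hs
        have hjs : j ∉ s := fun hj => (notMem_erase j univ) ((mem_powersetCard.1 hs).1 hj)
        rw [prod_insert hjs, Function.update_self]
        congr 1
        apply prod_congr rfl
        intro i hi
        have : i ≠ j := fun e => hjs (e ▸ hi)
        simp [Function.update_of_ne this]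
      · intro s hs u hu_ e
        have hjs : j ∉ s := fun hj => (notMem_erase j univ) ((mem_powersetCard.1 hs).1 hj)
        have hju : j ∉ u := fun hj => (notMem_erase j univ) ((mem_powersetCard.1 hu_).1 hj)
        rwa [insert_erase_invOn.2.injOn.eq_iff] at e <;> simp [hjs, hju]
  · rw [disjoint_left]
    intro s hs hsi
    obtain ⟨u, hu', rfl⟩ := mem_image.1 hsi
    exact (notMem_erase j univ) ((mem_powersetCard.1 hs).1 (mem_insert_self j u))

lemma double_count (k m : ℕ) (z : Fin k → ℂ) :
    ∑ j : Fin k, z j * ∑ s ∈ (univ.erase j).powersetCard m, ∏ i ∈ s, z i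
      = ((m + 1 : ℕ) : ℂ) * esymm k (m + 1) z := by
  have step1 : ∀ j : Fin k, z j * ∑ s ∈ (univ.erase j).powersetCard m, ∏ i ∈ s, z i
      = ∑ s ∈ (univ.erase j).powersetCard m, ∏ i ∈ insert j s, z i := by
    intro j
    rw [mul_sum]
    apply sum_congr rfl
    intro s hs
    have hjs : j ∉ s := fun hj => (notMem_erase j univ) ((mem_powersetCard.1 hs).1 hj)
    rw [prod_insert hjs]
  simp_rw [step1]
  have rhs : ((m + 1 : ℕ) : ℂ) * esymm k (m + 1) z
      = ∑ t ∈ univ.powersetCard (m + 1), ∑ j ∈ t, ∏ i ∈ t, z i := by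
    rw [esymm, mul_sum]
    apply sum_congr rfl
    intro t ht
    rw [sum_const, (mem_powersetCard.1 ht).2, nsmul_eq_mul]
  rw [rhs]
  rw [sum_sigma' univ (fun j => (univ.erase j).powersetCard m)
        (fun j s => ∏ i ∈ insert j s, z i),
      sum_sigma' (univ.powersetCard (m + 1)) (fun t => t) (fun t _ => ∏ i ∈ t, z i)]
  apply sum_nbij' (fun p => ⟨insert p.1 p.2, p.1⟩) (fun q => ⟨q.2, q.1.erase q.2⟩)
  · rintro ⟨j, s⟩ hp
    simp only [mem_sigma, mem_univ, true_and] at hp ⊢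
    have hps := mem_powersetCard.1 hp
    have hjs : j ∉ s := fun hj => (notMem_erase j univ) (hps.1 hj)
    refine ⟨mem_powersetCard.2 ⟨subset_univ _, ?_⟩, mem_insert_self j s⟩
    rw [card_insert_of_notMem hjs, hps.2]
  · rintro ⟨t, j⟩ hq
    simp only [mem_sigma, mem_univ, true_and] at hq ⊢
    have hts := mem_powersetCard.1 hq.1
    refine mem_powersetCard.2 ⟨?_, ?_⟩
    · intro i hi
      exact mem_erase.2 ⟨(mem_erase.1 hi).1, mem_univ i⟩
    · rw [card_erase_of_mem hq.2, hts.2]; rfl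
  · rintro ⟨j, s⟩ hp
    simp only [mem_sigma, mem_univ, true_and] at hp
    have hjs : j ∉ s := fun hj => (notMem_erase j univ) ((mem_powersetCard.1 hp).1 hj)
    simp [erase_insert hjs]
  · rintro ⟨t, j⟩ hq
    simp only [mem_sigma, mem_univ, true_and] at hq
    simp [insert_erase hq.2]
  · rintro ⟨j, s⟩ hp
    rfl

/-- Σ_j z_j² ∂σ_h/∂z_j = σ₁σ_h − (h+1)σ_{h+1} (with σ_{k+1} = 0), i.e. V₁ pushes
forward to U₁ = Σ_h (σ₁σ_h − (h+1)σ_{h+1}) ∂_{σ_h}. -/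
theorem stmt13 (k : ℕ) (z : Fin k → ℂ) (h : ℕ) (h1 : 1 ≤ h) (h2 : h ≤ k) :
    ∑ j : Fin k, (z j) ^ 2 * deriv (fun t : ℂ => esymm k h (Function.update z j t)) (z j)
      = esymm k 1 z * esymm k h z - ((h + 1 : ℕ) : ℂ) * esymm k (h + 1) z := by
  obtain ⟨m, rfl⟩ := Nat.exists_eq_add_of_le h1
  set M := 1 + m with hM
  have hderiv : ∀ j : Fin k,
      deriv (fun t : ℂ => esymm k M (Function.update z j t)) (z j)
        = ∑ s ∈ (univ.erase j).powersetCard m, ∏ i ∈ s, z i := by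
    intro j
    have hMe : M = m + 1 := by rw [hM, Nat.add_comm]
    have : (fun t : ℂ => esymm k M (Function.update z j t))
        = fun t => (∑ s ∈ (univ.erase j).powersetCard (m + 1), ∏ i ∈ s, z i)
            + t * ∑ s ∈ (univ.erase j).powersetCard m, ∏ i ∈ s, z i := by
      funext t; rw [hMe, expand_update]
    rw [this]
    simp [deriv_const_add]
  simp_rw [hderiv]
  -- esymm k M z = (sum over s not containing j) + z j * (sum over s card m not containing j)
  have hsplit : ∀ j : Fin k, esymm k M z
      = (∑ s ∈ (univ.erase j).powersetCard (m + 1), ∏ i ∈ s, z i)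
        + z j * ∑ s ∈ (univ.erase j).powersetCard m, ∏ i ∈ s, z i := by
    intro j
    have := expand_update k m z j (z j)
    rw [Function.update_eq_self] at this
    rw [hM, Nat.add_comm]
    exact this
  have he1 : esymm k 1 z = ∑ j : Fin k, z j := by
    rw [esymm]
    rw [Finset.powersetCard_one]
    rw [sum_map]
    simp
  have key : esymm k 1 z * esymm k M z
      = (∑ j : Fin k, z j * ∑ s ∈ (univ.erase j).powersetCard (m + 1), ∏ i ∈ s, z i)
        + ∑ j : Fin k, (z j) ^ 2 * ∑ s ∈ (univ.erase j).powersetCard m, ∏ i ∈ s, z i := by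
    rw [he1, sum_mul, ← sum_add_distrib]
    apply sum_congr rfl
    intro j _
    rw [hsplit j, mul_add]
    ring
  have hd := double_count k (m + 1) z
  have hMe : M + 1 = m + 1 + 1 := by omega
  rw [key, hd, hMe]
  have : ((m + 1 + 1 : ℕ) : ℂ) = ((M + 1 : ℕ) : ℂ) := by rw [hMe]
  ring
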